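/- With p_z and q_z as above, for \lambda in the real quadratic space V of trace-zero matrices with Q(\lambda) = -N\det(\lambda) and z in the upper half plane, the identities |p_z(\lambda)|^2 = -2 Q(\lambda_z) and |q_z(\lambda)|^2 = 2 y^2 Q(\lambda_{z^{\perp}}) hold, where \lambda = \lambda_z + \lambda_{z^{\perp}} is the orthogonal decomposition with respect to the negative line z \in Gr(V(\mathbb{R})) corresponding to the point z of the upper half plane. -/

import Mathlib

open Matrix

/-- The bilinear form `(λ, μ) = N tr(λμ)` on 2×2 real matrices. -/
noncomputable def Bform (N : ℕ) (lam mu : Matrix (Fin 2) (Fin 2) ℝ) : ℝ :=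
  (N : ℝ) * (lam * mu).trace

/-- The quadratic form `Q(λ) = -N det λ`. -/
noncomputable def Qform (N : ℕ) (lam : Matrix (Fin 2) (Fin 2) ℝ) : ℝ :=
  -(N : ℝ) * lam.det

/-- The vector `λ(z) = (1/(√(2N) y)) (-x, x²+y²; -1, x)` spanning the negative
line of `Gr(V(ℝ))` corresponding to `z = x + iy ∈ ℍ`. -/
noncomputable def lamvec (N : ℕ) (x y : ℝ) : Matrix (Fin 2) (Fin 2) ℝ :=
  (1 / (Real.sqrt (2 * N) * y)) • !![-x, x ^ 2 + y ^ 2; -1, x]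

/-- `q_z(λ) = -(1/√(2N)) (cN z² - b z + a)` for `λ = (b/2N, -a/N; c, -b/2N)`. -/
noncomputable def qz (N : ℕ) (z : ℂ) (lam : Matrix (Fin 2) (Fin 2) ℝ) : ℂ :=
  (-1 / (Real.sqrt (2 * N) : ℂ)) *
    ((lam 1 0 : ℝ) * (N : ℂ) * z ^ 2 - (2 * (N : ℝ) * lam 0 0 : ℝ) * z + (-(N : ℝ) * lam 0 1 : ℝ))

/-- With `λ_z = -(λ, λ(z)) • λ(z)` the orthogonal projection onto the negative
line `z` (note `(λ(z), λ(z)) = -1`) and `λ_{z^⊥} = λ - λ_z`, one has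
`|p_z(λ)|² = -2 Q(λ_z)` and `|q_z(λ)|² = 2 y² Q(λ_{z^⊥})`, where
`p_z(λ) = -(λ, λ(z))`. -/
theorem pz_qz_norms (N : ℕ) (hN : 0 < N) (x y : ℝ) (hy : 0 < y)
    (lam : Matrix (Fin 2) (Fin 2) ℝ) (hlam : lam.trace = 0) :
    (-(Bform N lam (lamvec N x y))) ^ 2
        = -2 * Qform N ((-(Bform N lam (lamvec N x y))) • lamvec N x y) ∧
    ‖qz N (Complex.mk x y) lam‖ ^ 2
        = 2 * y ^ 2 * Qform N (lam - (-(Bform N lam (lamvec N x y))) • lamvec N x y) := by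
  have hN0 : (N : ℝ) ≠ 0 := Nat.cast_ne_zero.mpr hN.ne'
  have hy0 : y ≠ 0 := hy.ne'
  set s := Real.sqrt (2 * N) with hsdef
  have hs2 : s ^ 2 = 2 * N := Real.sq_sqrt (by positivity)
  have hs0 : s ≠ 0 := by
    intro h; rw [h] at hs2; simp at hs2; omega
  have h11 : lam 1 1 = -lam 0 0 := by
    have := hlam
    simp [Matrix.trace, Fin.sum_univ_two, Matrix.diag] at this
    linarith
  set a := lam 0 0 with ha
  set b := lam 0 1 with hb
  set c := lam 1 0 with hc
  constructor
  · -- first part: Qform N (t • v) = -t^2/2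
    set t := -(Bform N lam (lamvec N x y))
    simp only [Qform, lamvec, smul_smul, Matrix.det_smul, Fintype.card_fin,
      Matrix.det_fin_two_of]
    field_simp
    ring_nf
    rw [Real.sq_sqrt (by positivity : (0:ℝ) ≤ (N:ℝ) * 2)]
    ring
  · have hB : Bform N lam (lamvec N x y)
        = ((N:ℝ) * (c*(x^2+y^2) - 2*a*x - b)) / (s*y) := by
      simp only [Bform, lamvec, Matrix.trace, Fin.sum_univ_two, Matrix.diag,
        Matrix.mul_apply, Matrix.smul_apply, Matrix.of_apply, Matrix.cons_val',
        Matrix.cons_val_zero, Matrix.cons_val_one, Matrix.head_cons, Matrix.head_fin_const,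
        Matrix.empty_val', Matrix.cons_val_fin_one, smul_eq_mul, h11, ← hsdef]
      ring
    have hcoef : (-(Bform N lam (lamvec N x y))) • lamvec N x y
        = ((-(c*(x^2+y^2) - 2*a*x - b)) / (2*y^2)) • !![-x, x ^ 2 + y ^ 2; -1, x] := by
      rw [hB, lamvec, smul_smul, ← hsdef]
      congr 1
      have h1 : s*y ≠ 0 := mul_ne_zero hs0 hy0
      field_simp
      linear_combination ((c*(x^2+y^2) - 2*a*x - b)) * hs2
    rw [hcoef]
    have hq : ‖qz N (Complex.mk x y) lam‖ ^ 2
        = (1/s^2) * ((c*N*(x^2-y^2) - 2*N*a*x - N*b)^2 + (c*N*(2*x*y) - 2*N*a*y)^2) := by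
      rw [Complex.sq_norm, qz, Complex.normSq_apply]
      simp only [Complex.mul_re, Complex.mul_im, Complex.add_re, Complex.add_im,
        Complex.sub_re, Complex.sub_im, Complex.ofReal_re, Complex.ofReal_im,
        Complex.div_re, Complex.div_im, Complex.neg_re, Complex.neg_im, Complex.normSq_apply,
        Complex.one_re, Complex.one_im, Complex.natCast_re, Complex.natCast_im, pow_two,
        ← hsdef]
      field_simp
      ring
    rw [hq, hs2]
    simp only [Qform, Matrix.det_fin_two, Matrix.sub_apply, Matrix.smul_apply,
      Matrix.of_apply, Matrix.cons_val', Matrix.cons_val_zero, Matrix.cons_val_one,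
      Matrix.head_cons, Matrix.empty_val', Matrix.cons_val_fin_one, Matrix.head_fin_const,
      smul_eq_mul, h11]
    field_simp
    ring
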